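/- As λ → ∞, λ³ · Var_λ(1/(N+1)) → 1, where Var_λ(1/(N+1)) = ∑_{k=0}^∞ e^{-λ} λ^k / k! · 1/(k+1)² − ( ∑_{k=0}^∞ e^{-λ} λ^k / k! · 1/(k+1) )² is the variance of 1/(N+1) under the Poisson distribution with parameter λ. That is, Var_λ(1/(N+1)) = λ^{-3}(1 + o(1)). -/
import Mathlib

open Filter Real

private lemma exp_tsum (l : ℝ) : ∑' k : ℕ, l ^ k / (Nat.factorial k : ℝ) = Real.exp l := by
  rw [Real.exp_eq_exp_ℝ, NormedSpace.exp_eq_tsum_div]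

private lemma summable_shift (l : ℝ) (m : ℕ) :
    Summable (fun k : ℕ => l ^ (k + m) / (Nat.factorial (k + m) : ℝ)) :=
  (Real.summable_pow_div_factorial l).comp_injective (add_left_injective m)

private lemma tsum_shift (l : ℝ) (m : ℕ) :
    ∑' k : ℕ, l ^ (k + m) / (Nat.factorial (k + m) : ℝ)
      = Real.exp l - ∑ i ∈ Finset.range m, l ^ i / (Nat.factorial i : ℝ) := by
  induction m with
  | zero => simpa using exp_tsum l
  | succ m ih =>
      have hs := summable_shift l m
      have h0 := Summable.tsum_eq_zero_add hs
      have he : (fun k : ℕ => l ^ (k + (m + 1)) / (Nat.factorial (k + (m + 1)) : ℝ))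
          = fun k : ℕ => l ^ ((k + 1) + m) / (Nat.factorial ((k + 1) + m) : ℝ) := by
        funext k; rw [show k + (m + 1) = (k + 1) + m by omega]
      rw [he]
      have h2 : ∑' k : ℕ, l ^ ((k + 1) + m) / (Nat.factorial ((k + 1) + m) : ℝ)
          = (∑' k : ℕ, l ^ (k + m) / (Nat.factorial (k + m) : ℝ))
            - l ^ (0 + m) / (Nat.factorial (0 + m) : ℝ) := by
        rw [h0]; ring
      rw [h2, ih, Finset.sum_range_succ]
      simp
      ring

private lemma fac_ne (k : ℕ) : ((Nat.factorial k : ℝ)) ≠ 0 :=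
  Nat.cast_ne_zero.2 (Nat.factorial_ne_zero k)

private lemma S1_eq {l : ℝ} (hl : 0 < l) :
    ∑' k : ℕ, Real.exp (-l) * l ^ k / (Nat.factorial k : ℝ) * (1 / ((k : ℝ) + 1))
      = Real.exp (-l) / l * (Real.exp l - 1) := by
  have h : ∀ k : ℕ, Real.exp (-l) * l ^ k / (Nat.factorial k : ℝ) * (1 / ((k : ℝ) + 1))
      = (Real.exp (-l) / l) * (l ^ (k + 1) / (Nat.factorial (k + 1) : ℝ)) := by
    intro k
    have hf : (Nat.factorial (k + 1) : ℝ) = (Nat.factorial k : ℝ) * ((k : ℝ) + 1) := by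
      rw [Nat.factorial_succ]; push_cast; ring
    have h1 : ((k : ℝ) + 1) ≠ 0 := by positivity
    rw [hf]
    field_simp
    ring
  rw [tsum_congr h, tsum_mul_left, tsum_shift l 1]
  simp [Nat.factorial]

private lemma A_eq {l : ℝ} (hl : 0 < l) :
    ∑' k : ℕ, Real.exp (-l) * l ^ k / (Nat.factorial k : ℝ)
        * (1 / (((k : ℝ) + 1) * ((k : ℝ) + 2)))
      = Real.exp (-l) / l ^ 2 * (Real.exp l - 1 - l) := by
  have h : ∀ k : ℕ, Real.exp (-l) * l ^ k / (Nat.factorial k : ℝ)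
        * (1 / (((k : ℝ) + 1) * ((k : ℝ) + 2)))
      = (Real.exp (-l) / l ^ 2) * (l ^ (k + 2) / (Nat.factorial (k + 2) : ℝ)) := by
    intro k
    have hf : (Nat.factorial (k + 2) : ℝ)
        = (Nat.factorial k : ℝ) * (((k : ℝ) + 1) * ((k : ℝ) + 2)) := by
      rw [show k + 2 = (k + 1) + 1 from rfl, Nat.factorial_succ, Nat.factorial_succ]
      push_cast; ring
    have h1 : ((k : ℝ) + 1) ≠ 0 := by positivity
    have h2 : ((k : ℝ) + 2) ≠ 0 := by positivity
    rw [hf]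
    field_simp
    ring
  rw [tsum_congr h, tsum_mul_left, tsum_shift l 2]
  simp [Finset.sum_range_succ, Nat.factorial]
  left; ring

private lemma B_eq {l : ℝ} (hl : 0 < l) :
    ∑' k : ℕ, Real.exp (-l) * l ^ k / (Nat.factorial k : ℝ)
        * (1 / (((k : ℝ) + 1) * ((k : ℝ) + 2) * ((k : ℝ) + 3)))
      = Real.exp (-l) / l ^ 3 * (Real.exp l - 1 - l - l ^ 2 / 2) := by
  have h : ∀ k : ℕ, Real.exp (-l) * l ^ k / (Nat.factorial k : ℝ)
        * (1 / (((k : ℝ) + 1) * ((k : ℝ) + 2) * ((k : ℝ) + 3)))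
      = (Real.exp (-l) / l ^ 3) * (l ^ (k + 3) / (Nat.factorial (k + 3) : ℝ)) := by
    intro k
    have hf : (Nat.factorial (k + 3) : ℝ)
        = (Nat.factorial k : ℝ) * (((k : ℝ) + 1) * ((k : ℝ) + 2) * ((k : ℝ) + 3)) := by
      rw [show k + 3 = ((k + 1) + 1) + 1 from rfl, Nat.factorial_succ, Nat.factorial_succ,
        Nat.factorial_succ]
      push_cast; ring
    have h1 : ((k : ℝ) + 1) ≠ 0 := by positivity
    have h2 : ((k : ℝ) + 2) ≠ 0 := by positivity
    have h3 : ((k : ℝ) + 3) ≠ 0 := by positivity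
    rw [hf]
    field_simp
    ring
  rw [tsum_congr h, tsum_mul_left, tsum_shift l 3]
  simp [Finset.sum_range_succ, Nat.factorial]
  left; ring

private lemma C_eq {l : ℝ} (hl : 0 < l) :
    ∑' k : ℕ, Real.exp (-l) * l ^ k / (Nat.factorial k : ℝ)
        * (1 / (((k : ℝ) + 1) * ((k : ℝ) + 2) * ((k : ℝ) + 3) * ((k : ℝ) + 4)))
      = Real.exp (-l) / l ^ 4 * (Real.exp l - 1 - l - l ^ 2 / 2 - l ^ 3 / 6) := by
  have h : ∀ k : ℕ, Real.exp (-l) * l ^ k / (Nat.factorial k : ℝ)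
        * (1 / (((k : ℝ) + 1) * ((k : ℝ) + 2) * ((k : ℝ) + 3) * ((k : ℝ) + 4)))
      = (Real.exp (-l) / l ^ 4) * (l ^ (k + 4) / (Nat.factorial (k + 4) : ℝ)) := by
    intro k
    have hf : (Nat.factorial (k + 4) : ℝ)
        = (Nat.factorial k : ℝ)
          * (((k : ℝ) + 1) * ((k : ℝ) + 2) * ((k : ℝ) + 3) * ((k : ℝ) + 4)) := by
      rw [show k + 4 = (((k + 1) + 1) + 1) + 1 from rfl, Nat.factorial_succ, Nat.factorial_succ,
        Nat.factorial_succ, Nat.factorial_succ]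
      push_cast; ring
    have h1 : ((k : ℝ) + 1) ≠ 0 := by positivity
    have h2 : ((k : ℝ) + 2) ≠ 0 := by positivity
    have h3 : ((k : ℝ) + 3) ≠ 0 := by positivity
    have h4 : ((k : ℝ) + 4) ≠ 0 := by positivity
    rw [hf]
    field_simp
    ring
  rw [tsum_congr h, tsum_mul_left, tsum_shift l 4]
  simp [Finset.sum_range_succ, Nat.factorial]
  left; ring

private lemma summable_aux {l : ℝ} (hl : 0 ≤ l) {w : ℕ → ℝ} (h0 : ∀ k, 0 ≤ w k)
    (h1 : ∀ k, w k ≤ 1) :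
    Summable (fun k : ℕ => Real.exp (-l) * l ^ k / (Nat.factorial k : ℝ) * w k) := by
  apply Summable.of_nonneg_of_le (fun k => mul_nonneg (div_nonneg (mul_nonneg (Real.exp_pos _).le (pow_nonneg hl k)) (Nat.cast_nonneg _)) (h0 k)) (fun k => ?_)
    ((Real.summable_pow_div_factorial l).mul_left (Real.exp (-l)))
  have hb : (0:ℝ) ≤ Real.exp (-l) * l ^ k / (Nat.factorial k : ℝ) :=
    div_nonneg (mul_nonneg (Real.exp_pos _).le (pow_nonneg hl k)) (Nat.cast_nonneg _)
  calc Real.exp (-l) * l ^ k / (Nat.factorial k : ℝ) * w k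
      ≤ Real.exp (-l) * l ^ k / (Nat.factorial k : ℝ) * 1 :=
        mul_le_mul_of_nonneg_left (h1 k) hb
    _ = Real.exp (-l) * (l ^ k / (Nat.factorial k : ℝ)) := by ring

set_option maxHeartbeats 1000000 in
/-- As `λ → ∞`, `λ³ · Var_λ(1/(N+1)) → 1`, where `N ∼ Poisson(λ)`;
i.e. `Var_λ(1/(N+1)) = λ⁻³ (1 + o(1))`. -/
theorem poisson_var_inv_succ_asymptotics :
    Filter.Tendsto
      (fun l : ℝ => l ^ 3 *
        ((∑' k : ℕ, Real.exp (-l) * l ^ k / (Nat.factorial k : ℝ) * (1 / ((k : ℝ) + 1) ^ 2))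
          - (∑' k : ℕ, Real.exp (-l) * l ^ k / (Nat.factorial k : ℝ) * (1 / ((k : ℝ) + 1))) ^ 2))
      Filter.atTop (nhds 1) := by
  have hGlim : Tendsto
      (fun l : ℝ => 1 - Real.exp (-l) * (1 + 3 / 2 * l ^ 2) - l * Real.exp (-l) ^ 2)
      atTop (nhds 1) := by
    have t0 := Real.tendsto_exp_neg_atTop_nhds_zero
    have t1 := Real.tendsto_pow_mul_exp_neg_atTop_nhds_zero 1
    have t2 := Real.tendsto_pow_mul_exp_neg_atTop_nhds_zero 2
    have h : Tendsto (fun l : ℝ => 1 - (Real.exp (-l) + 3 / 2 * (l ^ 2 * Real.exp (-l)))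
        - (l ^ 1 * Real.exp (-l)) * Real.exp (-l)) atTop
        (nhds (1 - ((0:ℝ) + 3 / 2 * 0) - 0 * 0)) :=
      (tendsto_const_nhds.sub (t0.add (tendsto_const_nhds.mul t2))).sub (t1.mul t0)
    norm_num at h
    exact h.congr fun l => by ring
  have hUlim : Tendsto
      (fun l : ℝ => (1 - Real.exp (-l) * (1 + 3 / 2 * l ^ 2) - l * Real.exp (-l) ^ 2) + 8 / l)
      atTop (nhds 1) := by
    have h8 : Tendsto (fun l : ℝ => 8 / l) atTop (nhds 0) :=
      (tendsto_const_nhds : Tendsto (fun _ : ℝ => (8:ℝ)) atTop (nhds 8)).div_atTop tendsto_id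
    simpa using hGlim.add h8
  refine tendsto_of_tendsto_of_tendsto_of_le_of_le' hGlim hUlim ?_ ?_
  all_goals
  · filter_upwards [eventually_ge_atTop (1:ℝ)] with l hl1
    have hl : (0:ℝ) < l := lt_of_lt_of_le one_pos hl1
    -- summabilities
    have hwA : ∀ k : ℕ, (0:ℝ) ≤ 1 / (((k:ℝ) + 1) * ((k:ℝ) + 2)) := fun k => by positivity
    have hwA1 : ∀ k : ℕ, (1:ℝ) / (((k:ℝ) + 1) * ((k:ℝ) + 2)) ≤ 1 := fun k => by
      rw [div_le_one (by positivity)]; nlinarith [Nat.cast_nonneg (α := ℝ) k, sq_nonneg ((k:ℝ)), pow_nonneg (Nat.cast_nonneg (α := ℝ) k) 3, pow_nonneg (Nat.cast_nonneg (α := ℝ) k) 4]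
    have hwB : ∀ k : ℕ, (0:ℝ) ≤ 1 / (((k:ℝ) + 1) * ((k:ℝ) + 2) * ((k:ℝ) + 3)) :=
      fun k => by positivity
    have hwB1 : ∀ k : ℕ, (1:ℝ) / (((k:ℝ) + 1) * ((k:ℝ) + 2) * ((k:ℝ) + 3)) ≤ 1 := fun k => by
      rw [div_le_one (by positivity)]; nlinarith [Nat.cast_nonneg (α := ℝ) k, sq_nonneg ((k:ℝ)), pow_nonneg (Nat.cast_nonneg (α := ℝ) k) 3, pow_nonneg (Nat.cast_nonneg (α := ℝ) k) 4]
    have hwR : ∀ k : ℕ, (0:ℝ) ≤ 2 / (((k:ℝ) + 1) ^ 2 * ((k:ℝ) + 2) * ((k:ℝ) + 3)) :=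
      fun k => by positivity
    have hwR1 : ∀ k : ℕ, (2:ℝ) / (((k:ℝ) + 1) ^ 2 * ((k:ℝ) + 2) * ((k:ℝ) + 3)) ≤ 1 := fun k => by
      rw [div_le_one (by positivity)]; nlinarith [Nat.cast_nonneg (α := ℝ) k, sq_nonneg ((k:ℝ)), pow_nonneg (Nat.cast_nonneg (α := ℝ) k) 3, pow_nonneg (Nat.cast_nonneg (α := ℝ) k) 4]
    have hwC : ∀ k : ℕ,
        (0:ℝ) ≤ 8 * (1 / (((k:ℝ) + 1) * ((k:ℝ) + 2) * ((k:ℝ) + 3) * ((k:ℝ) + 4))) :=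
      fun k => by positivity
    have hwC1 : ∀ k : ℕ,
        (8:ℝ) * (1 / (((k:ℝ) + 1) * ((k:ℝ) + 2) * ((k:ℝ) + 3) * ((k:ℝ) + 4))) ≤ 1 := fun k => by
      rw [mul_one_div, div_le_one (by positivity)]; nlinarith [Nat.cast_nonneg (α := ℝ) k, sq_nonneg ((k:ℝ)), pow_nonneg (Nat.cast_nonneg (α := ℝ) k) 3, pow_nonneg (Nat.cast_nonneg (α := ℝ) k) 4]
    have hAs := summable_aux hl.le hwA hwA1
    have hBs := summable_aux hl.le hwB hwB1
    have hRs := summable_aux hl.le hwR hwR1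
    have hCs := summable_aux hl.le hwC hwC1
    -- decomposition of the second moment
    have hterm : ∀ k : ℕ,
        Real.exp (-l) * l ^ k / (Nat.factorial k : ℝ) * (1 / ((k:ℝ) + 1) ^ 2)
          = Real.exp (-l) * l ^ k / (Nat.factorial k : ℝ)
              * (1 / (((k:ℝ) + 1) * ((k:ℝ) + 2)))
            + (Real.exp (-l) * l ^ k / (Nat.factorial k : ℝ)
                * (1 / (((k:ℝ) + 1) * ((k:ℝ) + 2) * ((k:ℝ) + 3)))
              + Real.exp (-l) * l ^ k / (Nat.factorial k : ℝ)
                * (2 / (((k:ℝ) + 1) ^ 2 * ((k:ℝ) + 2) * ((k:ℝ) + 3)))) := by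
      intro k
      have h1 : ((k:ℝ) + 1) ≠ 0 := by positivity
      have h2 : ((k:ℝ) + 2) ≠ 0 := by positivity
      have h3 : ((k:ℝ) + 3) ≠ 0 := by positivity
      have hdec : (1:ℝ) / ((k:ℝ) + 1) ^ 2
          = 1 / (((k:ℝ) + 1) * ((k:ℝ) + 2)) + (1 / (((k:ℝ) + 1) * ((k:ℝ) + 2) * ((k:ℝ) + 3))
            + 2 / (((k:ℝ) + 1) ^ 2 * ((k:ℝ) + 2) * ((k:ℝ) + 3))) := by
        field_simp
        ring
      rw [hdec]; ring
    have hsplit :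
        (∑' k : ℕ, Real.exp (-l) * l ^ k / (Nat.factorial k : ℝ) * (1 / ((k:ℝ) + 1) ^ 2))
          = Real.exp (-l) / l ^ 2 * (Real.exp l - 1 - l)
            + (Real.exp (-l) / l ^ 3 * (Real.exp l - 1 - l - l ^ 2 / 2)
              + ∑' k : ℕ, Real.exp (-l) * l ^ k / (Nat.factorial k : ℝ)
                  * (2 / (((k:ℝ) + 1) ^ 2 * ((k:ℝ) + 2) * ((k:ℝ) + 3)))) := by
      rw [tsum_congr hterm, Summable.tsum_add hAs (hBs.add hRs), Summable.tsum_add hBs hRs, A_eq hl, B_eq hl]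
    set R : ℝ := ∑' k : ℕ, Real.exp (-l) * l ^ k / (Nat.factorial k : ℝ)
        * (2 / (((k:ℝ) + 1) ^ 2 * ((k:ℝ) + 2) * ((k:ℝ) + 3))) with hRdef
    have hR0 : 0 ≤ R := tsum_nonneg fun k =>
      mul_nonneg (div_nonneg (mul_nonneg (Real.exp_pos _).le (pow_nonneg hl.le k))
        (Nat.cast_nonneg _)) (hwR k)
    have hRC : R ≤ 8 * (Real.exp (-l) / l ^ 4 * (Real.exp l - 1 - l - l ^ 2 / 2 - l ^ 3 / 6)) := by
      have hle : ∀ k : ℕ,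
          Real.exp (-l) * l ^ k / (Nat.factorial k : ℝ)
              * (2 / (((k:ℝ) + 1) ^ 2 * ((k:ℝ) + 2) * ((k:ℝ) + 3)))
            ≤ Real.exp (-l) * l ^ k / (Nat.factorial k : ℝ)
              * (8 * (1 / (((k:ℝ) + 1) * ((k:ℝ) + 2) * ((k:ℝ) + 3) * ((k:ℝ) + 4)))) := by
        intro k
        have hb : (0:ℝ) ≤ Real.exp (-l) * l ^ k / (Nat.factorial k : ℝ) :=
          div_nonneg (mul_nonneg (Real.exp_pos _).le (pow_nonneg hl.le k)) (Nat.cast_nonneg _)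
        apply mul_le_mul_of_nonneg_left _ hb
        rw [mul_one_div, div_le_div_iff₀ (by positivity) (by positivity)]
        nlinarith [Nat.cast_nonneg (α := ℝ) k, sq_nonneg ((k:ℝ)), pow_nonneg (Nat.cast_nonneg (α := ℝ) k) 3, pow_nonneg (Nat.cast_nonneg (α := ℝ) k) 4]
      have := Summable.tsum_le_tsum hle hRs hCs
      rw [hRdef]
      refine this.trans (le_of_eq ?_)
      have : ∀ k : ℕ,
          Real.exp (-l) * l ^ k / (Nat.factorial k : ℝ)
              * (8 * (1 / (((k:ℝ) + 1) * ((k:ℝ) + 2) * ((k:ℝ) + 3) * ((k:ℝ) + 4))))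
            = 8 * (Real.exp (-l) * l ^ k / (Nat.factorial k : ℝ)
              * (1 / (((k:ℝ) + 1) * ((k:ℝ) + 2) * ((k:ℝ) + 3) * ((k:ℝ) + 4)))) :=
        fun k => by ring
      rw [tsum_congr this, tsum_mul_left, C_eq hl]
    have hXne : Real.exp l ≠ 0 := Real.exp_ne_zero l
    have hkey : l ^ 3 *
        ((∑' k : ℕ, Real.exp (-l) * l ^ k / (Nat.factorial k : ℝ) * (1 / ((k:ℝ) + 1) ^ 2))
          - (∑' k : ℕ, Real.exp (-l) * l ^ k / (Nat.factorial k : ℝ) * (1 / ((k:ℝ) + 1))) ^ 2)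
        = (1 - Real.exp (-l) * (1 + 3 / 2 * l ^ 2) - l * Real.exp (-l) ^ 2) + l ^ 3 * R := by
      rw [hsplit, S1_eq hl, Real.exp_neg]
      field_simp
      ring
    have hCbound : l ^ 3 *
        (8 * (Real.exp (-l) / l ^ 4 * (Real.exp l - 1 - l - l ^ 2 / 2 - l ^ 3 / 6))) ≤ 8 / l := by
      have heq : l ^ 3 *
          (8 * (Real.exp (-l) / l ^ 4 * (Real.exp l - 1 - l - l ^ 2 / 2 - l ^ 3 / 6)))
          = 8 / l * (1 - Real.exp (-l) * (1 + l + l ^ 2 / 2 + l ^ 3 / 6)) := by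
        rw [Real.exp_neg]
        field_simp
        ring
      rw [heq]
      have hp : (0:ℝ) ≤ Real.exp (-l) * (1 + l + l ^ 2 / 2 + l ^ 3 / 6) :=
        mul_nonneg (Real.exp_pos _).le (by nlinarith)
      have : (1 : ℝ) - Real.exp (-l) * (1 + l + l ^ 2 / 2 + l ^ 3 / 6) ≤ 1 := by linarith
      calc 8 / l * (1 - Real.exp (-l) * (1 + l + l ^ 2 / 2 + l ^ 3 / 6))
          ≤ 8 / l * 1 := mul_le_mul_of_nonneg_left this (by positivity)
        _ = 8 / l := mul_one _
    have hl3R : 0 ≤ l ^ 3 * R := mul_nonneg (by positivity) hR0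
    have hl3RC : l ^ 3 * R ≤ l ^ 3 *
        (8 * (Real.exp (-l) / l ^ 4 * (Real.exp l - 1 - l - l ^ 2 / 2 - l ^ 3 / 6))) :=
      mul_le_mul_of_nonneg_left hRC (by positivity)
    rw [hkey]; linarith
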